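/- Let (α, β, γ) : (M₁, H₁, Δ₁) × N → (M₂, H₂, Δ₂) be a sesquiquadratic map of odd form groups, let X ≤ Δ₁ be a subgroup generated by elements u_i ∸ v_i (i ∈ I) with π(u_i) = π(v_i) and ρ(u_i) = ρ(v_i) such that (M₁, H₁, Δ₁/X) is a well-defined odd form group, and let Y ≤ N be the subgroup generated by elements n_j − n′_j (j ∈ J). Suppose that: γ(u_i, n) = γ(v_i, n) for all n in a fixed generating set of the abelian group N; γ(u, n_j) = γ(u, n′_j) for all u in a fixed set of elements generating the odd form parameter Δ₁ (i.e. whose images generate Δ₁/φ(H₁)); and (α, β) factors through (M₁, H₁) × (N/Y). Then (α, β, γ) factors through a sesquiquadratic map (M₁, H₁, Δ₁/X) × (N/Y) → (M₂, H₂, Δ₂). -/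

import Mathlib

/-- A hermitian group `(M, H)`: abelian groups with an involution on `H` and a
biadditive pairing `M × M → H` compatible with the involution. -/
structure HermitianGroup (M H : Type) [AddCommGroup M] [AddCommGroup H] where
  bar : H → H
  bar_add : ∀ h h', bar (h + h') = bar h + bar h'
  bar_bar : ∀ h, bar (bar h) = h
  pair : M → M → H
  pair_add_left : ∀ m m' n, pair (m + m') n = pair m n + pair m' n
  pair_add_right : ∀ m n n', pair m (n + n') = pair m n + pair m n'
  bar_pair : ∀ m m', bar (pair m m') = pair m' m

/-- An odd form group `(M, H, Δ)` over a hermitian group `(M, H)`. -/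
structure OddFormGroupStr {M H : Type} [AddCommGroup M] [AddCommGroup H]
    (hg : HermitianGroup M H) (Δ : Type) [AddGroup Δ] where
  φ : H → Δ
  π : Δ → M
  ρ : Δ → H
  φ_plus_bar : ∀ h, φ (h + hg.bar h) = 0
  φ_add : ∀ h h', φ (h + h') = φ h + φ h'
  φ_pair : ∀ m, φ (hg.pair m m) = 0
  π_φ : ∀ h, π (φ h) = 0
  ρ_φ : ∀ h, ρ (φ h) = h - hg.bar h
  π_add : ∀ u v, π (u + v) = π u + π v
  ρ_add : ∀ u v, ρ (u + v) = ρ u - hg.pair (π u) (π v) + ρ v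
  add_comm' : ∀ u v, u + v = v + u - φ (hg.pair (π u) (π v))
  ρ_bar : ∀ u, ρ u + hg.pair (π u) (π u) + hg.bar (ρ u) = 0

/-- A sesquiquadratic map of hermitian groups `(M₁,H₁) × N → (M₂,H₂)`. -/
structure SqHermStr {M₁ H₁ M₂ H₂ : Type} [AddCommGroup M₁] [AddCommGroup H₁]
    [AddCommGroup M₂] [AddCommGroup H₂]
    (hg₁ : HermitianGroup M₁ H₁) (hg₂ : HermitianGroup M₂ H₂)
    (N : Type) [AddCommGroup N] where
  α : M₁ → N → M₂
  β : N → H₁ → N → H₂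
  α_add_left : ∀ m m' n, α (m + m') n = α m n + α m' n
  α_add_right : ∀ m n n', α m (n + n') = α m n + α m n'
  β_add₁ : ∀ n n' h n'', β (n + n') h n'' = β n h n'' + β n' h n''
  β_add₂ : ∀ n h h' n', β n (h + h') n' = β n h n' + β n h' n'
  β_add₃ : ∀ n h n' n'', β n h (n' + n'') = β n h n' + β n h n''
  bar_β : ∀ n h n', hg₂.bar (β n h n') = β n' (hg₁.bar h) n
  pair_α : ∀ m n m' n', hg₂.pair (α m n) (α m' n') = β n (hg₁.pair m m') n'

/-- A sesquiquadratic map of odd form groups `(M₁,H₁,Δ₁) × N → (M₂,H₂,Δ₂)`. -/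
structure SqOFG {M₁ H₁ M₂ H₂ : Type} [AddCommGroup M₁] [AddCommGroup H₁]
    [AddCommGroup M₂] [AddCommGroup H₂]
    {hg₁ : HermitianGroup M₁ H₁} {hg₂ : HermitianGroup M₂ H₂}
    {Δ₁ Δ₂ : Type} [AddGroup Δ₁] [AddGroup Δ₂]
    (ofg₁ : OddFormGroupStr hg₁ Δ₁) (ofg₂ : OddFormGroupStr hg₂ Δ₂)
    (N : Type) [AddCommGroup N] extends SqHermStr hg₁ hg₂ N where
  γ : Δ₁ → N → Δ₂
  π_γ : ∀ u n, ofg₂.π (γ u n) = α (ofg₁.π u) n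
  γ_φ : ∀ h n, γ (ofg₁.φ h) n = ofg₂.φ (β n h n)
  γ_add : ∀ u u' n, γ (u + u') n = γ u n + γ u' n
  ρ_γ : ∀ u n, ofg₂.ρ (γ u n) = β n (ofg₁.ρ u) n
  γ_add_right : ∀ u n n', γ u (n + n') = γ u n + ofg₂.φ (β n' (ofg₁.ρ u) n) + γ u n'

/-- `x` has the expression `φ h ∔ ∑ kᵢ·uᵢ` (sum taken along the list `l`). -/
def FreeOFGExpr {M H : Type} [AddCommGroup M] [AddCommGroup H]
    {hg : HermitianGroup M H} {Δ : Type} [AddGroup Δ]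
    (ofg : OddFormGroupStr hg Δ) {I : Type} (u : I → Δ)
    (x : Δ) (h : H) (k : I → ℤ) (l : List I) : Prop :=
  l.Nodup ∧ (∀ i, i ∉ l → k i = 0) ∧
    x = ofg.φ h + (l.map fun i => k i • u i).sum
/-- Lemma `ofg-sq-fact`. -/
theorem statement7 {M₁ H₁ M₂ H₂ Δ₁ Δ₂ N : Type}
    [AddCommGroup M₁] [AddCommGroup H₁] [AddCommGroup M₂] [AddCommGroup H₂]
    [AddGroup Δ₁] [AddGroup Δ₂] [AddCommGroup N]
    {hg₁ : HermitianGroup M₁ H₁} {hg₂ : HermitianGroup M₂ H₂}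
    {ofg₁ : OddFormGroupStr hg₁ Δ₁} {ofg₂ : OddFormGroupStr hg₂ Δ₂}
    (sq : SqOFG ofg₁ ofg₂ N)
    {I J : Type} (u v : I → Δ₁)
    (hπ : ∀ i, ofg₁.π (u i) = ofg₁.π (v i))
    (hρ : ∀ i, ofg₁.ρ (u i) = ofg₁.ρ (v i))
    (X : AddSubgroup Δ₁)
    (hX : X = AddSubgroup.closure {x | ∃ i, x = u i - v i})
    (hnX : X.Normal)
    -- (M₁, H₁, Δ₁/X) is a well-defined odd form group
    (ofgQ : @OddFormGroupStr M₁ H₁ _ _ hg₁ (Δ₁ ⧸ X)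
      (@QuotientAddGroup.Quotient.addGroup Δ₁ _ X hnX))
    (hQφ : ∀ h', ofgQ.φ h' = QuotientAddGroup.mk (ofg₁.φ h'))
    (hQπ : ∀ x : Δ₁, ofgQ.π (QuotientAddGroup.mk x) = ofg₁.π x)
    (hQρ : ∀ x : Δ₁, ofgQ.ρ (QuotientAddGroup.mk x) = ofg₁.ρ x)
    (n' n'' : J → N) (Y : AddSubgroup N)
    (hY : Y = AddSubgroup.closure {y | ∃ j, y = n' j - n'' j})
    -- γ(uᵢ, n) = γ(vᵢ, n) for all n in a fixed generating set of N
    (SN : Set N) (hSN : AddSubgroup.closure SN = ⊤)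
    (hγ₁ : ∀ i, ∀ n ∈ SN, sq.γ (u i) n = sq.γ (v i) n)
    -- γ(u, nⱼ) = γ(u, n'ⱼ) for all u in a fixed generating set of the odd form parameter Δ₁
    (T : Set Δ₁) (hT : AddSubgroup.closure (Set.range ofg₁.φ ∪ T) = ⊤)
    (hγ₂ : ∀ x ∈ T, ∀ j, sq.γ x (n' j) = sq.γ x (n'' j))
    -- (α, β) factors through (M₁, H₁) × (N / Y)
    (hα : ∀ m n₁ n₂, n₁ - n₂ ∈ Y → sq.α m n₁ = sq.α m n₂)
    (hβ : ∀ n₁ n₂ h n₃ n₄, n₁ - n₂ ∈ Y → n₃ - n₄ ∈ Y →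
      sq.β n₁ h n₃ = sq.β n₂ h n₄) :
    ∃ sq' : @SqOFG M₁ H₁ M₂ H₂ _ _ _ _ hg₁ hg₂ (Δ₁ ⧸ X) Δ₂
        (@QuotientAddGroup.Quotient.addGroup Δ₁ _ X hnX) _ ofgQ ofg₂ (N ⧸ Y) _,
      (∀ m n, sq'.α m (QuotientAddGroup.mk n) = sq.α m n) ∧
      (∀ n₁ h n₂, sq'.β (QuotientAddGroup.mk n₁) h (QuotientAddGroup.mk n₂) = sq.β n₁ h n₂) ∧
      (∀ x n, sq'.γ (QuotientAddGroup.mk x) (QuotientAddGroup.mk n) = sq.γ x n) := by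
  haveI := hnX
  -- basic lemmas
  have φ2_zero : ofg₂.φ 0 = 0 := by
    have h := ofg₂.φ_add 0 0; rw [add_zero] at h; exact left_eq_add.mp h
  have β_zero1 : ∀ h n, sq.β 0 h n = 0 := by
    intro h n
    have h1 := sq.β_add₁ 0 0 h n; rw [add_zero] at h1; exact left_eq_add.mp h1
  have β_zero2 : ∀ n n', sq.β n 0 n' = 0 := by
    intro n n'
    have h1 := sq.β_add₂ n 0 0 n'; rw [add_zero] at h1; exact left_eq_add.mp h1
  have γ_zero_left : ∀ n, sq.γ 0 n = 0 := by
    intro n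
    have h1 := sq.γ_add 0 0 n; rw [add_zero] at h1; exact left_eq_add.mp h1
  have γ_neg_left : ∀ x n, sq.γ (-x) n = - sq.γ x n := by
    intro x n
    have h1 := sq.γ_add x (-x) n; rw [add_neg_cancel, γ_zero_left] at h1
    exact (neg_eq_of_add_eq_zero_right h1.symm).symm
  have γ_zero_right : ∀ x, sq.γ x 0 = 0 := by
    intro x
    have h1 := sq.γ_add_right x 0 0
    rw [add_zero, β_zero1, φ2_zero, add_zero] at h1
    exact left_eq_add.mp h1
  -- (*) : γ x (n' j) = γ x (n'' j) for all x
  have hYgen : ∀ j, n' j - n'' j ∈ Y := by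
    intro j; rw [hY]; exact AddSubgroup.subset_closure ⟨j, rfl⟩
  have star : ∀ (x : Δ₁) (j : J), sq.γ x (n' j) = sq.γ x (n'' j) := by
    intro x j
    have hx : x ∈ AddSubgroup.closure (Set.range ofg₁.φ ∪ T) := by rw [hT]; trivial
    induction hx using AddSubgroup.closure_induction with
    | mem z hz =>
      rcases hz with hz | hz
      · rcases hz with ⟨h, rfl⟩
        rw [sq.γ_φ, sq.γ_φ, hβ _ _ _ _ _ (hYgen j) (hYgen j)]
      · exact hγ₂ z hz j
    | zero => rw [γ_zero_left, γ_zero_left]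
    | add a b _ _ ha hb => rw [sq.γ_add, sq.γ_add, ha, hb]
    | neg a _ ha => rw [γ_neg_left, γ_neg_left, ha]
  -- γ descends in the second variable
  have Ylem : ∀ (x : Δ₁) (y : N), y ∈ Y → ∀ n, sq.γ x (n + y) = sq.γ x n := by
    intro x y hy
    rw [hY] at hy
    induction hy using AddSubgroup.closure_induction with
    | mem z hz =>
      rcases hz with ⟨j, rfl⟩
      intro n
      have e1 : n + (n' j - n'' j) = (n - n'' j) + n' j := by abel
      have e2 : n = (n - n'' j) + n'' j := by abel
      rw [e1, sq.γ_add_right]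
      conv_rhs => rw [e2, sq.γ_add_right]
      rw [star x j, hβ (n' j) (n'' j) (ofg₁.ρ x) (n - n'' j) (n - n'' j) (hYgen j)
        (by rw [sub_self]; exact zero_mem Y)]
    | zero => intro n; rw [add_zero]
    | add a b _ _ ha hb => intro n; rw [← add_assoc, hb, ha]
    | neg a _ ha =>
      intro n
      have := ha (n + -a)
      rw [add_assoc, neg_add_cancel, add_zero] at this
      exact this.symm
  -- γ(uᵢ,n) = γ(vᵢ,n) for all n
  have claim2 : ∀ i n, sq.γ (u i) n = sq.γ (v i) n := by
    intro i n
    have hn : n ∈ AddSubgroup.closure SN := by rw [hSN]; trivial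
    induction hn using AddSubgroup.closure_induction with
    | mem z hz => exact hγ₁ i z hz
    | zero => rw [γ_zero_right, γ_zero_right]
    | add a b _ _ ha hb =>
      rw [sq.γ_add_right, sq.γ_add_right, ha, hb, hρ i]
    | neg a _ ha =>
      have h1 := sq.γ_add_right (u i) a (-a)
      have h2 := sq.γ_add_right (v i) a (-a)
      rw [add_neg_cancel, γ_zero_right] at h1 h2
      rw [ha, hρ i] at h1
      have := h1.symm.trans h2
      -- γ (v i) a + φ(..) + γ (u i) (-a) = γ (v i) a + φ(..) + γ (v i) (-a)
      exact add_left_cancel this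
  -- γ vanishes on X
  have Xlem : ∀ x ∈ X, ∀ n, sq.γ x n = 0 := by
    intro x hx
    rw [hX] at hx
    induction hx using AddSubgroup.closure_induction with
    | mem z hz =>
      rcases hz with ⟨i, rfl⟩
      intro n
      rw [sub_eq_add_neg, sq.γ_add, γ_neg_left, claim2 i n, add_neg_cancel]
    | zero => exact γ_zero_left
    | add a b _ _ ha hb => intro n; rw [sq.γ_add, ha, hb, add_zero]
    | neg a _ ha => intro n; rw [γ_neg_left, ha, neg_zero]
  have γ_congr : ∀ (x₁ x₂ : Δ₁) (n₁ n₂ : N), -x₁ + x₂ ∈ X → -n₁ + n₂ ∈ Y →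
      sq.γ x₁ n₁ = sq.γ x₂ n₂ := by
    intro x₁ x₂ n₁ n₂ hx hn
    have e1 : sq.γ x₂ n₁ = sq.γ x₁ n₁ := by
      conv_lhs => rw [show x₂ = x₁ + (-x₁ + x₂) from (add_neg_cancel_left _ _).symm]
      rw [sq.γ_add, Xlem _ hx, add_zero]
    have e2 : sq.γ x₂ n₂ = sq.γ x₂ n₁ := by
      conv_lhs => rw [show n₂ = n₁ + (-n₁ + n₂) by abel]
      rw [Ylem _ _ hn]
    rw [e2, e1]
  have hαr : ∀ (m : M₁) (a b : N), (QuotientAddGroup.leftRel Y).r a b → sq.α m a = sq.α m b := by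
    intro m a b hab
    refine hα m a b ?_
    have h1 : -a + b ∈ Y := (QuotientAddGroup.leftRel_apply).mp hab
    have h2 := neg_mem h1
    rwa [neg_add_rev, neg_neg, neg_add_eq_sub] at h2
  have hYr : ∀ (a b : N), (QuotientAddGroup.leftRel Y).r a b → -a + b ∈ Y :=
    fun a b hab => (QuotientAddGroup.leftRel_apply).mp hab
  have hβr : ∀ (a b : N), (QuotientAddGroup.leftRel Y).r a b → a - b ∈ Y := by
    intro a b hab
    have h2 := neg_mem (hYr a b hab)
    rwa [neg_add_rev, neg_neg, neg_add_eq_sub] at h2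
  -- construct sq'
  refine ⟨{
    α := fun m q => Quotient.liftOn' q (sq.α m) (hαr m)
    β := fun q h q' => Quotient.liftOn₂' q q' (fun a b => sq.β a h b)
      (fun a b c d hac hbd => hβ a c h b d (hβr a c hac) (hβr b d hbd))
    γ := fun p q => Quotient.liftOn₂' p q sq.γ
      (fun a b c d hac hbd =>
        γ_congr a c b d ((QuotientAddGroup.leftRel_apply).mp hac) (hYr b d hbd))
    α_add_left := ?_, α_add_right := ?_, β_add₁ := ?_, β_add₂ := ?_, β_add₃ := ?_
    bar_β := ?_, pair_α := ?_, π_γ := ?_, γ_φ := ?_, γ_add := ?_, ρ_γ := ?_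
    γ_add_right := ?_ }, fun m n => rfl, fun n₁ h n₂ => rfl, fun x n => rfl⟩
  · intro m m' q
    induction q using QuotientAddGroup.induction_on with
    | H n => exact sq.α_add_left m m' n
  · intro m q q'
    induction q using QuotientAddGroup.induction_on with
    | H n => induction q' using QuotientAddGroup.induction_on with
      | H n' => rw [← QuotientAddGroup.mk_add]; exact sq.α_add_right m n n'
  · intro q q' h q''
    induction q using QuotientAddGroup.induction_on with
    | H a => induction q' using QuotientAddGroup.induction_on with
      | H b => induction q'' using QuotientAddGroup.induction_on with
        | H c => rw [← QuotientAddGroup.mk_add]; exact sq.β_add₁ a b h c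
  · intro q h h' q'
    induction q using QuotientAddGroup.induction_on with
    | H a => induction q' using QuotientAddGroup.induction_on with
      | H b => exact sq.β_add₂ a h h' b
  · intro q h q' q''
    induction q using QuotientAddGroup.induction_on with
    | H a => induction q' using QuotientAddGroup.induction_on with
      | H b => induction q'' using QuotientAddGroup.induction_on with
        | H c => rw [← QuotientAddGroup.mk_add]; exact sq.β_add₃ a h b c
  · intro q h q'
    induction q using QuotientAddGroup.induction_on with
    | H a => induction q' using QuotientAddGroup.induction_on with
      | H b => exact sq.bar_β a h b
  · intro m q m' q'
    induction q using QuotientAddGroup.induction_on with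
    | H a => induction q' using QuotientAddGroup.induction_on with
      | H b => exact sq.pair_α m a m' b
  · intro p q
    induction p using QuotientAddGroup.induction_on with
    | H x => induction q using QuotientAddGroup.induction_on with
      | H n =>
        show ofg₂.π (sq.γ x n) = sq.α (ofgQ.π (QuotientAddGroup.mk x)) n
        rw [hQπ]; exact sq.π_γ x n
  · intro h q
    induction q using QuotientAddGroup.induction_on with
    | H n =>
      show Quotient.liftOn₂' (ofgQ.φ h) _ sq.γ _ = _
      rw [hQφ]
      exact sq.γ_φ h n
  · intro p p' q
    induction p using QuotientAddGroup.induction_on with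
    | H x => induction p' using QuotientAddGroup.induction_on with
      | H x' => induction q using QuotientAddGroup.induction_on with
        | H n => rw [← QuotientAddGroup.mk_add]; exact sq.γ_add x x' n
  · intro p q
    induction p using QuotientAddGroup.induction_on with
    | H x => induction q using QuotientAddGroup.induction_on with
      | H n =>
        show ofg₂.ρ (sq.γ x n) = sq.β n (ofgQ.ρ (QuotientAddGroup.mk x)) n
        rw [hQρ]; exact sq.ρ_γ x n
  · intro p q q'
    induction p using QuotientAddGroup.induction_on with
    | H x => induction q using QuotientAddGroup.induction_on with
      | H n => induction q' using QuotientAddGroup.induction_on with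
        | H n₂ =>
          rw [← QuotientAddGroup.mk_add]
          show sq.γ x (n + n₂) = sq.γ x n +
            ofg₂.φ (sq.β n₂ (ofgQ.ρ (QuotientAddGroup.mk x)) n) + sq.γ x n₂
          rw [hQρ]; exact sq.γ_add_right x n n₂
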